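/- There is a universal constant C > 0 such that the approximation-error term satisfies T_2 := E[(f_∞(x̃) − f⋆(x̃) − f_∞(x_NN) + f⋆(x_NN))²] ≤ C · d² (1 − L)² · ( log(n^{1/d}) / n )^{1/d}. -/

import Mathlib

open MeasureTheory
open scoped RealInnerProductSpace ENNReal

/-- Uniform probability distribution on the closed Euclidean ball of radius `√(d+2)`
centered at the origin in `ℝ^d`. -/
noncomputable def uniformBall (d : ℕ) : Measure (EuclideanSpace ℝ (Fin d)) :=
  (volume (Metric.closedBall (0 : EuclideanSpace ℝ (Fin d)) (Real.sqrt (d + 2))))⁻¹ •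
    volume.restrict (Metric.closedBall (0 : EuclideanSpace ℝ (Fin d)) (Real.sqrt (d + 2)))

/-- The joint distribution of the i.i.d. samples `x_1, …, x_n` and the test point `x̃`. -/
noncomputable def jointMeasure (d n : ℕ) :
    Measure ((Fin n → EuclideanSpace ℝ (Fin d)) × EuclideanSpace ℝ (Fin d)) :=
  (Measure.pi fun _ : Fin n => uniformBall d).prod (uniformBall d)

/-- `xNN (xs, x̃)` is a nearest neighbor of `x̃` among `x_1, …, x_n`
in Euclidean distance. -/
def IsNN (d n : ℕ)
    (xNN : (Fin n → EuclideanSpace ℝ (Fin d)) × EuclideanSpace ℝ (Fin d) →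
      EuclideanSpace ℝ (Fin d)) : Prop :=
  ∀ ω : (Fin n → EuclideanSpace ℝ (Fin d)) × EuclideanSpace ℝ (Fin d),
    ∃ j : Fin n, xNN ω = ω.1 j ∧ ∀ i : Fin n, ‖ω.2 - xNN ω‖ ≤ ‖ω.2 - ω.1 i‖

/-- **Approximation-error bound:** there is a universal constant `C > 0` such that
`T₂ := E[(f_∞(x̃) − f⋆(x̃) − f_∞(x_NN) + f⋆(x_NN))²]`
`≤ C d² (1 − L)² (log(n^{1/d})/n)^{1/d}`,
where `f⋆(x) = ⟨x, θ⋆⟩` and `f_∞(x) = ⟨x, L θ⋆⟩`. -/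
lemma sqrtR_pos (d : ℕ) : 0 < Real.sqrt (d + 2) := by
  apply Real.sqrt_pos.2; positivity

lemma volB_pos (d : ℕ) :
    0 < volume (Metric.closedBall (0 : EuclideanSpace ℝ (Fin d)) (Real.sqrt (d + 2))) :=
  Metric.measure_closedBall_pos _ _ (sqrtR_pos d)

lemma volB_ne_top (d : ℕ) :
    volume (Metric.closedBall (0 : EuclideanSpace ℝ (Fin d)) (Real.sqrt (d + 2))) ≠ ⊤ :=
  (Metric.isBounded_closedBall).measure_lt_top.ne

lemma uniformBall_prob (d : ℕ) : IsProbabilityMeasure (uniformBall d) := by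
  constructor
  rw [uniformBall, Measure.smul_apply, Measure.restrict_apply MeasurableSet.univ,
    Set.univ_inter, smul_eq_mul, ENNReal.inv_mul_cancel (volB_pos d).ne' (volB_ne_top d)]

lemma uniformBall_compl_ball (d : ℕ) :
    uniformBall d (Metric.closedBall (0 : EuclideanSpace ℝ (Fin d)) (Real.sqrt (d + 2)))ᶜ = 0 := by
  rw [uniformBall, Measure.smul_apply,
    Measure.restrict_apply (measurableSet_closedBall.compl),
    Set.compl_inter_self, measure_empty, smul_eq_mul, mul_zero]

lemma ball_inclusion {d : ℕ} {x : EuclideanSpace ℝ (Fin d)} {s : ℝ}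
    (hx : x ∈ Metric.closedBall (0 : EuclideanSpace ℝ (Fin d)) (Real.sqrt (d + 2)))
    (hs0 : 0 ≤ s) (hs2 : s ≤ 2 * Real.sqrt (d + 2)) :
    Metric.closedBall ((1 - s / (2 * Real.sqrt (d + 2))) • x) (s / 2) ⊆
      Metric.closedBall x s ∩
        Metric.closedBall (0 : EuclideanSpace ℝ (Fin d)) (Real.sqrt (d + 2)) := by
  set R := Real.sqrt (d + 2) with hR
  have hRpos : 0 < R := sqrtR_pos d
  have hxR : ‖x‖ ≤ R := by simpa [Metric.mem_closedBall, dist_zero_right] using hx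
  have hfrac0 : 0 ≤ s / (2 * R) := by positivity
  have hfrac1 : s / (2 * R) ≤ 1 := by
    rw [div_le_one (by positivity)]; exact hs2
  intro y hy
  rw [Metric.mem_closedBall] at hy
  have hcx : dist ((1 - s / (2 * R)) • x) x ≤ s / 2 := by
    have : (1 - s / (2 * R)) • x - x = (-(s / (2 * R))) • x := by
      rw [sub_smul, one_smul, neg_smul]; abel
    rw [dist_eq_norm, this, norm_smul, norm_neg, Real.norm_eq_abs, abs_of_nonneg hfrac0]
    calc s / (2 * R) * ‖x‖ ≤ s / (2 * R) * R := by
          exact mul_le_mul_of_nonneg_left hxR hfrac0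
      _ = s / 2 := by field_simp
  constructor
  · rw [Metric.mem_closedBall]
    calc dist y x ≤ dist y ((1 - s / (2 * R)) • x) + dist ((1 - s / (2 * R)) • x) x :=
          dist_triangle _ _ _
      _ ≤ s / 2 + s / 2 := add_le_add hy hcx
      _ = s := by ring
  · rw [Metric.mem_closedBall, dist_zero_right]
    have hc : ‖(1 - s / (2 * R)) • x‖ ≤ R - s / 2 := by
      rw [norm_smul, Real.norm_eq_abs, abs_of_nonneg (by linarith)]
      calc (1 - s / (2 * R)) * ‖x‖ ≤ (1 - s / (2 * R)) * R :=
            mul_le_mul_of_nonneg_left hxR (by linarith)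
        _ = R - s / 2 := by field_simp
    calc ‖y‖ ≤ ‖(1 - s / (2 * R)) • x‖ + ‖y - (1 - s / (2 * R)) • x‖ := norm_le_insert' _ _
      _ ≤ (R - s / 2) + s / 2 := add_le_add hc (by rwa [dist_eq_norm] at hy)
      _ = R := by ring

lemma uniformBall_closedBall_ge {d : ℕ} {x : EuclideanSpace ℝ (Fin d)} {s : ℝ}
    (hx : x ∈ Metric.closedBall (0 : EuclideanSpace ℝ (Fin d)) (Real.sqrt (d + 2)))
    (hs0 : 0 ≤ s) (hs2 : s ≤ 2 * Real.sqrt (d + 2)) :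
    ENNReal.ofReal ((s / (2 * Real.sqrt (d + 2))) ^ d) ≤ uniformBall d (Metric.closedBall x s) := by
  set R := Real.sqrt (d + 2) with hR
  have hRpos : 0 < R := sqrtR_pos d
  set B := Metric.closedBall (0 : EuclideanSpace ℝ (Fin d)) R with hB
  have hkey : volume (Metric.closedBall ((1 - s / (2 * R)) • x) (s / 2)) ≤
      volume (Metric.closedBall x s ∩ B) :=
    measure_mono (ball_inclusion hx hs0 hs2)
  have hdim : Module.finrank ℝ (EuclideanSpace ℝ (Fin d)) = d := finrank_euclideanSpace_fin
  have hsmall : volume (Metric.closedBall ((1 - s / (2 * R)) • x) (s / 2)) =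
      ENNReal.ofReal ((s / 2) ^ d) * volume (Metric.ball (0 : EuclideanSpace ℝ (Fin d)) 1) := by
    rw [Measure.addHaar_closedBall _ _ (by positivity), hdim]
  have hbig : volume B =
      ENNReal.ofReal (R ^ d) * volume (Metric.ball (0 : EuclideanSpace ℝ (Fin d)) 1) := by
    rw [hB, Measure.addHaar_closedBall _ _ hRpos.le, hdim]
  set V := volume (Metric.ball (0 : EuclideanSpace ℝ (Fin d)) 1) with hV
  have hV0 : V ≠ 0 := by
    refine (Metric.measure_ball_pos _ _ one_pos).ne'
  have hVtop : V ≠ ⊤ := (Metric.isBounded_ball).measure_lt_top.ne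
  rw [uniformBall, Measure.smul_apply, Measure.restrict_apply measurableSet_closedBall,
    smul_eq_mul]
  calc ENNReal.ofReal ((s / (2 * R)) ^ d)
      = (ENNReal.ofReal (R ^ d))⁻¹ * ENNReal.ofReal ((s / 2) ^ d) := by
        rw [← ENNReal.ofReal_inv_of_pos (by positivity), ← ENNReal.ofReal_mul (by positivity)]
        congr 1
        rw [div_pow, div_pow]
        rw [mul_pow]; ring
    _ = (ENNReal.ofReal (R ^ d) * V)⁻¹ * (ENNReal.ofReal ((s / 2) ^ d) * V) := by
        rw [ENNReal.mul_inv (Or.inl (ENNReal.ofReal_pos.2 (by positivity)).ne') (Or.inl ENNReal.ofReal_ne_top)]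
        rw [mul_assoc, mul_comm (ENNReal.ofReal ((s / 2) ^ d)) V, ← mul_assoc V⁻¹ V _,
          ENNReal.inv_mul_cancel hV0 hVtop, one_mul]
    _ ≤ (volume B)⁻¹ * volume (Metric.closedBall x s ∩ B) := by
        rw [hbig, ← hsmall]
        exact mul_le_mul_right hkey _

lemma miss_measure_le (d n : ℕ) {s p : ℝ} (hp0 : 0 ≤ p) (hp1 : p ≤ 1)
    (hball : ∀ x ∈ Metric.closedBall (0 : EuclideanSpace ℝ (Fin d)) (Real.sqrt (d + 2)),
      ENNReal.ofReal p ≤ uniformBall d (Metric.closedBall x s)) :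
    jointMeasure d n {ω | ∀ i, s < dist ω.2 (ω.1 i)} ≤ ENNReal.ofReal ((1 - p) ^ n) := by
  haveI := uniformBall_prob d
  haveI : ∀ i : Fin n, IsProbabilityMeasure ((fun _ : Fin n => uniformBall d) i) :=
    fun _ => uniformBall_prob d
  have hE : MeasurableSet {ω : (Fin n → EuclideanSpace ℝ (Fin d)) × EuclideanSpace ℝ (Fin d) |
      ∀ i, s < dist ω.2 (ω.1 i)} := by
    rw [Set.setOf_forall]
    exact MeasurableSet.iInter fun i =>
      measurableSet_lt measurable_const ((measurable_snd.dist (measurable_pi_apply i |>.comp measurable_fst)))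
  rw [jointMeasure, Measure.prod_apply_symm hE]
  have hbound : ∀ y : EuclideanSpace ℝ (Fin d),
      y ∈ Metric.closedBall (0 : EuclideanSpace ℝ (Fin d)) (Real.sqrt (d + 2)) →
      (Measure.pi fun _ : Fin n => uniformBall d)
        ((fun xs => (xs, y)) ⁻¹' {ω : (Fin n → EuclideanSpace ℝ (Fin d)) × EuclideanSpace ℝ (Fin d) |
          ∀ i, s < dist ω.2 (ω.1 i)}) ≤ ENNReal.ofReal ((1 - p) ^ n) := by
    intro y hy
    have hpre : ((fun xs => (xs, y)) ⁻¹' {ω : (Fin n → EuclideanSpace ℝ (Fin d)) × EuclideanSpace ℝ (Fin d) |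
        ∀ i, s < dist ω.2 (ω.1 i)}) = Set.pi Set.univ (fun _ : Fin n => (Metric.closedBall y s)ᶜ) := by
      ext xs
      simp only [Set.mem_preimage, Set.mem_setOf_eq, Set.mem_pi, Set.mem_univ, true_implies,
        Set.mem_compl_iff, Metric.mem_closedBall, not_le, dist_comm]
    rw [hpre, Measure.pi_pi]
    have hone : uniformBall d (Metric.closedBall y s)ᶜ ≤ ENNReal.ofReal (1 - p) := by
      rw [measure_compl measurableSet_closedBall (measure_ne_top _ _), measure_univ]
      calc (1 : ℝ≥0∞) - uniformBall d (Metric.closedBall y s) ≤ 1 - ENNReal.ofReal p :=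
            tsub_le_tsub_left (hball y hy) 1
        _ = ENNReal.ofReal (1 - p) := by
            rw [ENNReal.ofReal_sub _ hp0, ENNReal.ofReal_one]
    calc (∏ _i : Fin n, uniformBall d (Metric.closedBall y s)ᶜ)
        ≤ ∏ _i : Fin n, ENNReal.ofReal (1 - p) := Finset.prod_le_prod' fun _ _ => hone
      _ = ENNReal.ofReal ((1 - p) ^ n) := by
          rw [Finset.prod_const, ENNReal.ofReal_pow (by linarith), Finset.card_univ,
            Fintype.card_fin]
  calc (∫⁻ y, (Measure.pi fun _ : Fin n => uniformBall d)
        ((fun xs => (xs, y)) ⁻¹' {ω : (Fin n → EuclideanSpace ℝ (Fin d)) × EuclideanSpace ℝ (Fin d) |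
          ∀ i, s < dist ω.2 (ω.1 i)}) ∂uniformBall d)
      ≤ ∫⁻ _y, ENNReal.ofReal ((1 - p) ^ n) ∂uniformBall d := by
        refine lintegral_mono_ae ?_
        have h0 : uniformBall d (Metric.closedBall (0 : EuclideanSpace ℝ (Fin d)) (Real.sqrt (d + 2)))ᶜ = 0 :=
          uniformBall_compl_ball d
        filter_upwards [measure_eq_zero_iff_ae_notMem.1 h0] with y hy
        exact hbound y (by by_contra h; exact hy h)
      _ = ENNReal.ofReal ((1 - p) ^ n) := by
        rw [lintegral_const, measure_univ, mul_one]

lemma d_le_pow (d : ℕ) (hd : 1 ≤ d) : ((d : ℝ)) ^ ((d : ℝ)⁻¹) ≤ 2 := by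
  have h1 : (d : ℝ) ≤ (2 : ℝ) ^ (d : ℕ) := by
    exact_mod_cast (Nat.lt_two_pow_self (n := d)).le
  have h2 : ((d : ℝ)) ^ ((d : ℝ)⁻¹) ≤ ((2 : ℝ) ^ (d : ℕ)) ^ ((d : ℝ)⁻¹) :=
    Real.rpow_le_rpow (by positivity) h1 (by positivity)
  calc ((d : ℝ)) ^ ((d : ℝ)⁻¹) ≤ ((2 : ℝ) ^ (d : ℕ)) ^ ((d : ℝ)⁻¹) := h2
    _ = (2 : ℝ) ^ ((d : ℝ) * (d : ℝ)⁻¹) := by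
        rw [← Real.rpow_natCast 2 d, ← Real.rpow_mul (by norm_num)]
    _ = 2 := by
        rw [mul_inv_cancel₀ (by exact_mod_cast Nat.one_le_iff_ne_zero.1 hd), Real.rpow_one]

lemma inv_n_le (d n : ℕ) (hd : 1 ≤ d) (hn : 2 ≤ n) :
    ((n : ℝ))⁻¹ ≤ 2 * ((Real.log n / ((d : ℝ) * n)) ^ ((d : ℝ)⁻¹)) := by
  have hn0 : (0 : ℝ) < n := by positivity
  have hd0 : (0 : ℝ) < d := by exact_mod_cast hd
  have hlogn : (1 : ℝ) / 2 ≤ Real.log n := by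
    have h2 : Real.log 2 ≤ Real.log n := Real.log_le_log (by norm_num) (by exact_mod_cast hn)
    nlinarith [Real.log_two_gt_d9]
  have ht0 : 0 < Real.log n / ((d : ℝ) * n) := by positivity
  -- key: ((2n)⁻¹)^d ≤ log n / (d n)
  have hnat : d * n ≤ 2 ^ (d - 1) * n ^ d := by
    have h1 : d ≤ 2 ^ (d - 1) := by
      have := Nat.lt_two_pow_self (n := d - 1)
      omega
    have h2 : n ≤ n ^ d := Nat.le_self_pow (by omega) n
    exact Nat.mul_le_mul h1 h2
  have hkey : ((2 * (n : ℝ))⁻¹) ^ (d : ℕ) ≤ Real.log n / ((d : ℝ) * n) := by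
    rw [inv_pow, mul_pow, inv_eq_one_div, div_le_div_iff₀ (by positivity) (by positivity), one_mul]
    have hcast : (d : ℝ) * n ≤ 2 ^ (d - 1) * (n : ℝ) ^ d := by exact_mod_cast hnat
    have h2d : (2 : ℝ) ^ d = 2 * 2 ^ (d - 1) := by
      rw [← pow_succ']
      congr 1
      omega
    rw [h2d]
    nlinarith [hcast, mul_le_mul_of_nonneg_right hlogn
      (by positivity : (0:ℝ) ≤ 2 * 2 ^ (d - 1) * (n : ℝ) ^ d)]
  have h2 : (2 * (n : ℝ))⁻¹ ≤ (Real.log n / ((d : ℝ) * n)) ^ ((d : ℝ)⁻¹) := by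
    have h3 := Real.rpow_le_rpow (by positivity) hkey (by positivity : (0:ℝ) ≤ (d : ℝ)⁻¹)
    rwa [← Real.rpow_natCast ((2 * (n : ℝ))⁻¹) d, ← Real.rpow_mul (by positivity),
      mul_inv_cancel₀ hd0.ne', Real.rpow_one] at h3
  calc ((n : ℝ))⁻¹ = 2 * (2 * (n : ℝ))⁻¹ := by
        rw [mul_inv]; ring
    _ ≤ 2 * ((Real.log n / ((d : ℝ) * n)) ^ ((d : ℝ)⁻¹)) := by linarith

lemma final_arith (d n : ℕ) (hd : 1 ≤ d) (hn : 2 ≤ n) :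
    4 * ((d : ℝ) + 2) * (((Real.log n / n) ^ ((d : ℝ)⁻¹)) ^ 2) + 4 * ((d : ℝ) + 2) * (n : ℝ)⁻¹
      ≤ 48 * (d : ℝ) ^ 2 * ((Real.log ((n : ℝ) ^ ((d : ℝ)⁻¹)) / n) ^ ((d : ℝ)⁻¹)) := by
  have hn0 : (0 : ℝ) < n := by positivity
  have hd0 : (0 : ℝ) < d := by exact_mod_cast hd
  have hd1 : (1 : ℝ) ≤ d := by exact_mod_cast hd
  have hlog0 : 0 < Real.log n := Real.log_pos (by exact_mod_cast hn)
  have hp0 : 0 < Real.log n / n := by positivity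
  have hp1 : Real.log n / n ≤ 1 := by
    rw [div_le_one hn0]
    linarith [Real.log_le_sub_one_of_pos hn0]
  -- rewrite target exponent-log
  have hlogr : Real.log ((n : ℝ) ^ ((d : ℝ)⁻¹)) = (d : ℝ)⁻¹ * Real.log n :=
    Real.log_rpow hn0 _
  have htr : Real.log ((n : ℝ) ^ ((d : ℝ)⁻¹)) / n = Real.log n / ((d : ℝ) * n) := by
    rw [hlogr]; field_simp
  rw [htr]
  set t := Real.log n / ((d : ℝ) * n) with ht
  have ht0 : 0 < t := by rw [ht]; positivity
  set r := t ^ ((d : ℝ)⁻¹) with hr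
  have hr0 : 0 < r := Real.rpow_pos_of_pos ht0 _
  set q := (Real.log n / n) ^ ((d : ℝ)⁻¹) with hq
  have hq0 : 0 < q := Real.rpow_pos_of_pos hp0 _
  have hq1 : q ≤ 1 := Real.rpow_le_one hp0.le hp1 (by positivity)
  have hq2r : q ≤ 2 * r := by
    have hpt : Real.log n / n = (d : ℝ) * t := by rw [ht]; field_simp
    calc q = ((d : ℝ) * t) ^ ((d : ℝ)⁻¹) := by rw [hq, hpt]
      _ = (d : ℝ) ^ ((d : ℝ)⁻¹) * r := Real.mul_rpow hd0.le ht0.le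
      _ ≤ 2 * r := mul_le_mul_of_nonneg_right (d_le_pow d hd) hr0.le
  have hinv : (n : ℝ)⁻¹ ≤ 2 * r := inv_n_le d n hd hn
  have hqsq : q ^ 2 ≤ q := by nlinarith
  have hd3 : (d : ℝ) + 2 ≤ 3 * d := by linarith
  calc 4 * ((d : ℝ) + 2) * q ^ 2 + 4 * ((d : ℝ) + 2) * (n : ℝ)⁻¹
      ≤ 4 * (3 * (d : ℝ)) * (2 * r) + 4 * (3 * (d : ℝ)) * (2 * r) := by
        have h1 : 4 * ((d : ℝ) + 2) * q ^ 2 ≤ 4 * (3 * (d : ℝ)) * (2 * r) := by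
          have : q ^ 2 ≤ 2 * r := le_trans hqsq hq2r
          nlinarith [sq_nonneg q]
        have h2 : 4 * ((d : ℝ) + 2) * (n : ℝ)⁻¹ ≤ 4 * (3 * (d : ℝ)) * (2 * r) := by
          have hn0' : (0:ℝ) ≤ (n : ℝ)⁻¹ := by positivity
          nlinarith [hinv, hn0', hr0.le]
        linarith
    _ = 48 * (d : ℝ) * r := by ring
    _ ≤ 48 * (d : ℝ) ^ 2 * r := by
        have hdd : (d : ℝ) ≤ (d : ℝ) ^ 2 := by nlinarith
        nlinarith [mul_le_mul_of_nonneg_right hdd hr0.le]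

lemma inner_sq_le {d : ℕ} (θ v w : EuclideanSpace ℝ (Fin d)) (L : ℝ) (hθ : ‖θ‖ = 1) :
    (⟪v, L • θ⟫ - ⟪v, θ⟫ - ⟪w, L • θ⟫ + ⟪w, θ⟫) ^ 2 ≤ (1 - L) ^ 2 * ‖v - w‖ ^ 2 := by
  have h1 : ⟪v, L • θ⟫ - ⟪v, θ⟫ - ⟪w, L • θ⟫ + ⟪w, θ⟫ = (L - 1) * ⟪v - w, θ⟫ := by
    rw [real_inner_smul_right, real_inner_smul_right, inner_sub_left]
    ring
  rw [h1, mul_pow]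
  have h2 : ⟪v - w, θ⟫ ^ 2 ≤ ‖v - w‖ ^ 2 := by
    have h3 := abs_real_inner_le_norm (v - w) θ
    rw [hθ, mul_one] at h3
    calc ⟪v - w, θ⟫ ^ 2 = |⟪v - w, θ⟫| ^ 2 := (sq_abs _).symm
      _ ≤ ‖v - w‖ ^ 2 := by nlinarith [abs_nonneg ⟪v - w, θ⟫]
  have h4 : (L - 1) ^ 2 = (1 - L) ^ 2 := by ring
  rw [h4]
  exact mul_le_mul_of_nonneg_left h2 (by positivity)

set_option maxHeartbeats 2000000 in
theorem resmem_T2_bound :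
    ∃ C : ℝ, 0 < C ∧
      ∀ (d n : ℕ), 1 ≤ d → 2 ≤ n →
      ∀ (θstar : EuclideanSpace ℝ (Fin d)) (L : ℝ),
        ‖θstar‖ = 1 → 0 < L → L < 1 →
      ∀ xNN : (Fin n → EuclideanSpace ℝ (Fin d)) × EuclideanSpace ℝ (Fin d) →
          EuclideanSpace ℝ (Fin d),
        Measurable xNN → IsNN d n xNN →
        ∫⁻ ω, ENNReal.ofReal
            ((⟪ω.2, L • θstar⟫ - ⟪ω.2, θstar⟫ - ⟪xNN ω, L • θstar⟫ + ⟪xNN ω, θstar⟫) ^ 2)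
          ∂(jointMeasure d n)
        ≤ ENNReal.ofReal
            (C * (d : ℝ) ^ 2 * (1 - L) ^ 2 *
              (Real.log ((n : ℝ) ^ ((d : ℝ)⁻¹)) / (n : ℝ)) ^ ((d : ℝ)⁻¹)) := by
  refine ⟨48, by norm_num, ?_⟩
  intro d n hd hn θstar L hθ hL0 hL1 xNN hmeasNN hNN
  haveI := uniformBall_prob d
  haveI : ∀ i : Fin n, IsProbabilityMeasure ((fun _ : Fin n => uniformBall d) i) :=
    fun _ => uniformBall_prob d
  haveI : IsProbabilityMeasure (jointMeasure d n) := by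
    rw [jointMeasure]; infer_instance
  have hn0 : (0 : ℝ) < n := by positivity
  have hd0 : (0 : ℝ) < d := by exact_mod_cast hd
  set R := Real.sqrt (d + 2) with hRdef
  have hR0 : 0 < R := sqrtR_pos d
  have hRsq : R ^ 2 = (d : ℝ) + 2 := Real.sq_sqrt (by positivity)
  set p := Real.log n / n with hpdef
  have hlog0 : 0 < Real.log n := Real.log_pos (by exact_mod_cast hn)
  have hp0 : 0 < p := by positivity
  have hp1 : p ≤ 1 := by
    rw [hpdef, div_le_one hn0]
    linarith [Real.log_le_sub_one_of_pos hn0]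
  set q := p ^ ((d : ℝ)⁻¹) with hqdef
  have hq0 : 0 < q := Real.rpow_pos_of_pos hp0 _
  have hq1 : q ≤ 1 := Real.rpow_le_one hp0.le hp1 (by positivity)
  set s := 2 * R * q with hsdef
  have hs0 : 0 ≤ s := by positivity
  have hs2R : s ≤ 2 * R := by nlinarith
  set B := Metric.closedBall (0 : EuclideanSpace ℝ (Fin d)) R with hBdef
  -- ball lower bound
  have hball : ∀ x ∈ B, ENNReal.ofReal p ≤ uniformBall d (Metric.closedBall x s) := by
    intro x hx
    have h1 := uniformBall_closedBall_ge hx hs0 hs2R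
    have h2 : (s / (2 * R)) ^ d = p := by
      have hsr : s / (2 * R) = q := by
        rw [hsdef]; field_simp
      rw [hsr, hqdef, ← Real.rpow_natCast (p ^ ((d : ℝ)⁻¹)) d, ← Real.rpow_mul hp0.le,
        inv_mul_cancel₀ hd0.ne', Real.rpow_one]
    rwa [h2] at h1
  have hmiss := miss_measure_le d n hp0.le hp1 hball
  set E' := {ω : (Fin n → EuclideanSpace ℝ (Fin d)) × EuclideanSpace ℝ (Fin d) |
    ∀ i, s < dist ω.2 (ω.1 i)} with hE'def
  have hE : MeasurableSet E' := by
    rw [hE'def, Set.setOf_forall]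
    exact MeasurableSet.iInter fun i =>
      measurableSet_lt measurable_const
        ((measurable_snd.dist (measurable_pi_apply i |>.comp measurable_fst)))
  set c1 := (1 - L) ^ 2 * s ^ 2 with hc1def
  set c2 := (1 - L) ^ 2 * (2 * R) ^ 2 with hc2def
  have hc10 : 0 ≤ c1 := by positivity
  have hc20 : 0 ≤ c2 := by positivity
  -- a.e. membership
  have hae2 : ∀ᵐ ω ∂jointMeasure d n, ω.2 ∈ B := by
    rw [Filter.eventually_iff, mem_ae_iff]
    have hset : {ω : (Fin n → EuclideanSpace ℝ (Fin d)) × EuclideanSpace ℝ (Fin d) |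
        ω.2 ∈ B}ᶜ = (Set.univ : Set (Fin n → EuclideanSpace ℝ (Fin d))) ×ˢ Bᶜ := by
      ext ω; simp [Set.mem_prod]
    rw [jointMeasure, hset, Measure.prod_prod, hBdef, uniformBall_compl_ball, mul_zero]
  have hae1 : ∀ᵐ ω ∂jointMeasure d n, ∀ i, ω.1 i ∈ B := by
    rw [ae_all_iff]
    intro i
    rw [Filter.eventually_iff, mem_ae_iff]
    have hset : {ω : (Fin n → EuclideanSpace ℝ (Fin d)) × EuclideanSpace ℝ (Fin d) |
        ω.1 i ∈ B}ᶜ = (Function.eval i ⁻¹' Bᶜ) ×ˢ (Set.univ : Set (EuclideanSpace ℝ (Fin d))) := by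
      ext ω; simp [Set.mem_prod, Function.eval]
    have hpi0 : (Measure.pi fun _ : Fin n => uniformBall d) (Function.eval i ⁻¹' Bᶜ) = 0 :=
      Measure.pi_eval_preimage_null _ (by rw [hBdef]; exact uniformBall_compl_ball d)
    rw [jointMeasure, hset, Measure.prod_prod, hpi0, zero_mul]
  -- pointwise a.e. bound
  have hptwise : ∀ᵐ ω ∂jointMeasure d n,
      ENNReal.ofReal
          ((⟪ω.2, L • θstar⟫ - ⟪ω.2, θstar⟫ - ⟪xNN ω, L • θstar⟫ + ⟪xNN ω, θstar⟫) ^ 2)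
        ≤ ENNReal.ofReal c1 + E'.indicator (fun _ => ENNReal.ofReal c2) ω := by
    filter_upwards [hae2, hae1] with ω h2 h1
    obtain ⟨j, hj, hmin⟩ := hNN ω
    have hbase := inner_sq_le θstar ω.2 (xNN ω) L hθ
    by_cases hmem : ω ∈ E'
    · rw [Set.indicator_of_mem hmem]
      have hnorm : ‖ω.2 - xNN ω‖ ≤ 2 * R := by
        rw [hj]
        have ha : ‖ω.2‖ ≤ R := by
          have := h2; rwa [hBdef, Metric.mem_closedBall, dist_zero_right] at this
        have hb : ‖ω.1 j‖ ≤ R := by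
          have := h1 j; rwa [hBdef, Metric.mem_closedBall, dist_zero_right] at this
        calc ‖ω.2 - ω.1 j‖ ≤ ‖ω.2‖ + ‖ω.1 j‖ := norm_sub_le _ _
          _ ≤ 2 * R := by linarith
      have hexpr : (⟪ω.2, L • θstar⟫ - ⟪ω.2, θstar⟫ - ⟪xNN ω, L • θstar⟫ + ⟪xNN ω, θstar⟫) ^ 2
          ≤ c2 := by
        refine le_trans hbase ?_
        rw [hc2def]
        exact mul_le_mul_of_nonneg_left
          (by nlinarith [norm_nonneg (ω.2 - xNN ω)]) (by positivity)
      exact le_trans (ENNReal.ofReal_le_ofReal hexpr) le_add_self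
    · rw [Set.indicator_of_notMem hmem, add_zero]
      rw [hE'def, Set.mem_setOf_eq, not_forall] at hmem
      obtain ⟨i, hi⟩ := hmem
      rw [not_lt] at hi
      have hnorm : ‖ω.2 - xNN ω‖ ≤ s := by
        refine le_trans (hmin i) ?_
        rwa [← dist_eq_norm]
      have hexpr : (⟪ω.2, L • θstar⟫ - ⟪ω.2, θstar⟫ - ⟪xNN ω, L • θstar⟫ + ⟪xNN ω, θstar⟫) ^ 2
          ≤ c1 := by
        refine le_trans hbase ?_
        rw [hc1def]
        exact mul_le_mul_of_nonneg_left
          (by nlinarith [norm_nonneg (ω.2 - xNN ω)]) (by positivity)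
      exact ENNReal.ofReal_le_ofReal hexpr
  -- exponential bound
  have hexpn : (1 - p) ^ n ≤ (n : ℝ)⁻¹ := by
    have h1 : 1 - p ≤ Real.exp (-p) := by linarith [Real.add_one_le_exp (-p)]
    have h2 : (1 - p) ^ n ≤ (Real.exp (-p)) ^ n :=
      pow_le_pow_left₀ (by linarith) h1 n
    have h3 : (Real.exp (-p)) ^ n = Real.exp ((n : ℝ) * (-p)) := (Real.exp_nat_mul _ n).symm
    have h4 : (n : ℝ) * (-p) = -Real.log n := by
      rw [hpdef]; field_simp
    rw [h3, h4, Real.exp_neg, Real.exp_log hn0] at h2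
    exact h2
  -- final real inequality
  have hfinal : c1 + c2 * (1 - p) ^ n ≤
      48 * (d : ℝ) ^ 2 * (1 - L) ^ 2 *
        (Real.log ((n : ℝ) ^ ((d : ℝ)⁻¹)) / (n : ℝ)) ^ ((d : ℝ)⁻¹) := by
    have harith := final_arith d n hd hn
    have hc2n : c2 * (1 - p) ^ n ≤ c2 * (n : ℝ)⁻¹ :=
      mul_le_mul_of_nonneg_left hexpn hc20
    have hc1eq : c1 = (1 - L) ^ 2 * (4 * ((d : ℝ) + 2) * q ^ 2) := by
      rw [hc1def, hsdef, ← hRsq]; ring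
    have hc2eq : c2 * (n : ℝ)⁻¹ = (1 - L) ^ 2 * (4 * ((d : ℝ) + 2) * (n : ℝ)⁻¹) := by
      rw [hc2def, ← hRsq]; ring
    calc c1 + c2 * (1 - p) ^ n ≤ c1 + c2 * (n : ℝ)⁻¹ := by linarith
      _ = (1 - L) ^ 2 * (4 * ((d : ℝ) + 2) * q ^ 2 + 4 * ((d : ℝ) + 2) * (n : ℝ)⁻¹) := by
          rw [hc1eq, hc2eq]; ring
      _ ≤ (1 - L) ^ 2 * (48 * (d : ℝ) ^ 2 *
            (Real.log ((n : ℝ) ^ ((d : ℝ)⁻¹)) / (n : ℝ)) ^ ((d : ℝ)⁻¹)) :=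
          mul_le_mul_of_nonneg_left harith (by positivity)
      _ = 48 * (d : ℝ) ^ 2 * (1 - L) ^ 2 *
            (Real.log ((n : ℝ) ^ ((d : ℝ)⁻¹)) / (n : ℝ)) ^ ((d : ℝ)⁻¹) := by ring
  -- put everything together
  calc ∫⁻ ω, ENNReal.ofReal
          ((⟪ω.2, L • θstar⟫ - ⟪ω.2, θstar⟫ - ⟪xNN ω, L • θstar⟫ + ⟪xNN ω, θstar⟫) ^ 2)
        ∂(jointMeasure d n)
      ≤ ∫⁻ ω, (ENNReal.ofReal c1 + E'.indicator (fun _ => ENNReal.ofReal c2) ω)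
          ∂(jointMeasure d n) := lintegral_mono_ae hptwise
    _ = ENNReal.ofReal c1 + ENNReal.ofReal c2 * jointMeasure d n E' := by
        rw [lintegral_add_left measurable_const, lintegral_const, measure_univ, mul_one,
          lintegral_indicator_const hE]
    _ ≤ ENNReal.ofReal c1 + ENNReal.ofReal c2 * ENNReal.ofReal ((1 - p) ^ n) :=
        add_le_add_right (mul_le_mul_right hmiss _) _
    _ = ENNReal.ofReal (c1 + c2 * (1 - p) ^ n) := by
        rw [← ENNReal.ofReal_mul hc20, ← ENNReal.ofReal_add hc10 (mul_nonneg hc20 (pow_nonneg (by linarith) n))]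
    _ ≤ ENNReal.ofReal
          (48 * (d : ℝ) ^ 2 * (1 - L) ^ 2 *
            (Real.log ((n : ℝ) ^ ((d : ℝ)⁻¹)) / (n : ℝ)) ^ ((d : ℝ)⁻¹)) :=
        ENNReal.ofReal_le_ofReal hfinal
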